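/- Convergence of q-deformed convergents of an infinite continued fraction: let 0 < q < 1 and let (aₖ)_{k ≥ 1} be a sequence of integers with a₁ ≥ 0 and aₖ ≥ 1 for all k ≥ 2. For n ≥ 1 let Mₙ := σ₁(q)^{−a₁} · σ₂(q)^{a₂} · σ₁(q)^{−a₃} ⋯ (the product of the first n alternating factors, starting with σ₁(q)^{−a₁}), and let vₙ := Mₙ · (1, 0)ᵀ ∈ ℝ². Then for all n ≥ 2 the second coordinate of vₙ is strictly positive, and the sequence of ratios xₙ := (vₙ)₁ / (vₙ)₂ (n ≥ 2) converges to a limit in ℝ. -/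

import Mathlib

open Matrix Filter

/-- The q-deformed generator σ₁(q) = [[q⁻¹, −q⁻¹], [0, 1]]. -/
noncomputable def sig1 (q : ℝ) : Matrix (Fin 2) (Fin 2) ℝ := !![q⁻¹, -q⁻¹; 0, 1]

/-- The q-deformed generator σ₂(q) = [[1, 0], [1, q⁻¹]]. -/
noncomputable def sig2 (q : ℝ) : Matrix (Fin 2) (Fin 2) ℝ := !![1, 0; 1, q⁻¹]

/-- `betaMat q a k` is the product of the first `k` alternating factors
`σ₁(q)^{-a 1} · σ₂(q)^{a 2} · σ₁(q)^{-a 3} ⋯` (indices start at 1). -/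
noncomputable def betaMat (q : ℝ) (a : ℕ → ℤ) : ℕ → Matrix (Fin 2) (Fin 2) ℝ
  | 0 => 1
  | k + 1 => betaMat q a k *
      (if (k + 1) % 2 = 1 then sig1 q ^ (-(a (k + 1))) else sig2 q ^ (a (k + 1)))

/-- Möbius action of a 2×2 real matrix on a real number: z ↦ (Az + B)/(Cz + D). -/
noncomputable def mobiusAct (M : Matrix (Fin 2) (Fin 2) ℝ) (z : ℝ) : ℝ :=
  (M 0 0 * z + M 0 1) / (M 1 0 * z + M 1 1)

/-- Möbius image of ∞ under a 2×2 real matrix: ∞ ↦ A/C. -/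
noncomputable def mobiusInf (M : Matrix (Fin 2) (Fin 2) ℝ) : ℝ := M 0 0 / M 1 0

/-- `a` (on indices 1,…,2n) is an even continued form: either `a₁ ≥ 0` and `aᵢ ≥ 1` for
`2 ≤ i ≤ 2n`, or `a₁ ≤ 0` and `aᵢ ≤ −1` for `2 ≤ i ≤ 2n`. -/
def IsEvenForm (n : ℕ) (a : ℕ → ℤ) : Prop :=
  1 ≤ n ∧ ((0 ≤ a 1 ∧ ∀ i, 2 ≤ i → i ≤ 2 * n → 1 ≤ a i)
    ∨ (a 1 ≤ 0 ∧ ∀ i, 2 ≤ i → i ≤ 2 * n → a i ≤ -1))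

/-- Value of the continued fraction `a i + 1/(a (i+1) + 1/(⋯ + 1/(a last)))`. -/
def cfVal (a : ℕ → ℤ) (last i : ℕ) : ℚ :=
  if last ≤ i then (a i : ℚ)
  else (a i : ℚ) + 1 / cfVal a last (i + 1)
termination_by last - i
decreasing_by omega

/-- `a` (on indices 1,…,2n) is the even continued fraction expansion of the rational `x`:
for `x ≠ 0` it is an even continued form of value `x`; by convention the expansion of `0`
is `(−1, 1)`. -/
def IsECFExp (n : ℕ) (a : ℕ → ℤ) (x : ℚ) : Prop :=
  (x ≠ 0 ∧ IsEvenForm n a ∧ cfVal a (2 * n) 1 = x) ∨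
  (x = 0 ∧ n = 1 ∧ a 1 = -1 ∧ a 2 = 1)

/-- The right q-deformation attached to expansion data `(n, a)`:
the image of ∞ under the Möbius transformation of β(a, q). -/
noncomputable def sharpVal (q : ℝ) (n : ℕ) (a : ℕ → ℤ) : ℝ :=
  mobiusInf (betaMat q a (2 * n))

/-- The left q-deformation attached to expansion data `(n, a)`:
the image of 1/(1−q) under the Möbius transformation of β(a, q). -/
noncomputable def flatVal (q : ℝ) (n : ℕ) (a : ℕ → ℤ) : ℝ :=
  mobiusAct (betaMat q a (2 * n)) (1 / (1 - q))

namespace QDC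

abbrev Mat := Matrix (Fin 2) (Fin 2) ℝ

/-- Structural invariant for the partial products: nonnegative top row,
positive bottom row, positive determinant. -/
def Good (M : Mat) : Prop :=
  0 ≤ M 0 0 ∧ 0 ≤ M 0 1 ∧ 0 < M 1 0 ∧ 0 < M 1 1 ∧
    0 < M 0 0 * M 1 1 - M 0 1 * M 1 0

/-- Length of the interval `[B/D, A/C]`. -/
noncomputable def len (M : Mat) : ℝ := M 0 0 / M 1 0 - M 0 1 / M 1 1

lemma len_lit (a b c d : ℝ) : len !![a, b; c, d] = a / c - b / d := by
  unfold len; norm_num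

lemma mul_tri1 (M : Mat) (u c : ℝ) :
    M * !![u, c; 0, 1] = !![M 0 0 * u, M 0 0 * c + M 0 1;
                            M 1 0 * u, M 1 0 * c + M 1 1] := by
  ext i j
  fin_cases i <;> fin_cases j <;>
    simp [Matrix.mul_apply, Fin.sum_univ_two]

lemma mul_tri2 (M : Mat) (b t : ℝ) :
    M * !![1, 0; b, t] = !![M 0 0 + M 0 1 * b, M 0 1 * t;
                            M 1 0 + M 1 1 * b, M 1 1 * t] := by
  ext i j
  fin_cases i <;> fin_cases j <;>
    simp [Matrix.mul_apply, Fin.sum_univ_two]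

lemma good_step1 {M : Mat} (h : Good M) {u c : ℝ} (hu0 : 0 < u) (hc : 1 ≤ c) :
    Good (M * !![u, c; 0, 1]) := by
  obtain ⟨hA, hB, hC, hD, hdet⟩ := h
  rw [mul_tri1]
  refine ⟨?_, ?_, ?_, ?_, ?_⟩ <;> simp <;> nlinarith

lemma good_step2 {M : Mat} (h : Good M) {b t : ℝ} (hb : 1 ≤ b) (ht : 0 < t) :
    Good (M * !![1, 0; b, t]) := by
  obtain ⟨hA, hB, hC, hD, hdet⟩ := h
  rw [mul_tri2]
  refine ⟨?_, ?_, ?_, ?_, ?_⟩ <;> simp <;> nlinarith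

lemma nest_step1 {M : Mat} (h : Good M) {u c : ℝ} (hu0 : 0 < u) (hc : 1 ≤ c) :
    (M * !![u, c; 0, 1]) 0 0 / (M * !![u, c; 0, 1]) 1 0 ≤ M 0 0 / M 1 0 ∧
    M 0 1 / M 1 1 ≤ (M * !![u, c; 0, 1]) 0 1 / (M * !![u, c; 0, 1]) 1 1 := by
  obtain ⟨hA, hB, hC, hD, hdet⟩ := h
  rw [mul_tri1]
  constructor
  · simp only [Fin.isValue, Matrix.of_apply, Matrix.cons_val', Matrix.cons_val_zero,
      Matrix.empty_val', Matrix.cons_val_fin_one, Matrix.cons_val_one, Matrix.head_fin_const,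
      Matrix.head_cons]
    rw [mul_div_mul_right _ _ (ne_of_gt hu0)]
  · simp only [Fin.isValue, Matrix.of_apply, Matrix.cons_val', Matrix.cons_val_zero,
      Matrix.empty_val', Matrix.cons_val_fin_one, Matrix.cons_val_one, Matrix.head_fin_const,
      Matrix.head_cons]
    rw [div_le_div_iff₀ hD (by nlinarith)]
    nlinarith

lemma nest_step2 {M : Mat} (h : Good M) {b t : ℝ} (hb : 1 ≤ b) (ht : 0 < t) :
    (M * !![1, 0; b, t]) 0 0 / (M * !![1, 0; b, t]) 1 0 ≤ M 0 0 / M 1 0 ∧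
    M 0 1 / M 1 1 ≤ (M * !![1, 0; b, t]) 0 1 / (M * !![1, 0; b, t]) 1 1 := by
  obtain ⟨hA, hB, hC, hD, hdet⟩ := h
  rw [mul_tri2]
  constructor
  · simp only [Fin.isValue, Matrix.of_apply, Matrix.cons_val', Matrix.cons_val_zero,
      Matrix.empty_val', Matrix.cons_val_fin_one, Matrix.cons_val_one, Matrix.head_fin_const,
      Matrix.head_cons]
    rw [div_le_div_iff₀ (by nlinarith) hC]
    nlinarith
  · simp only [Fin.isValue, Matrix.of_apply, Matrix.cons_val', Matrix.cons_val_zero,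
      Matrix.empty_val', Matrix.cons_val_fin_one, Matrix.cons_val_one, Matrix.head_fin_const,
      Matrix.head_cons]
    rw [mul_div_mul_right _ _ (ne_of_gt ht)]

lemma len_step1 {M : Mat} (h : Good M) {u c : ℝ} (hu0 : 0 < u) (hc : 1 ≤ c) :
    len (M * !![u, c; 0, 1]) ≤ len M := by
  obtain ⟨hA, hB, hC, hD, hdet⟩ := h
  have hD' : (0:ℝ) < M 1 0 * c + M 1 1 := by nlinarith
  rw [mul_tri1, len_lit]
  have eL : M 0 0 * u / (M 1 0 * u) - (M 0 0 * c + M 0 1) / (M 1 0 * c + M 1 1)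
      = (M 0 0 * M 1 1 - M 0 1 * M 1 0) / (M 1 0 * (M 1 0 * c + M 1 1)) := by
    field_simp; ring
  have eR : len M = (M 0 0 * M 1 1 - M 0 1 * M 1 0) / (M 1 0 * M 1 1) := by
    unfold len; field_simp
  rw [eL, eR]
  gcongr
  all_goals first | exact hdet.le | positivity | nlinarith

lemma len_step2 {M : Mat} (h : Good M) {b t : ℝ} (hb : 1 ≤ b) (ht : 0 < t) :
    len (M * !![1, 0; b, t]) ≤ len M := by
  obtain ⟨hA, hB, hC, hD, hdet⟩ := h
  have hC' : (0:ℝ) < M 1 0 + M 1 1 * b := by nlinarith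
  rw [mul_tri2, len_lit]
  have eL : (M 0 0 + M 0 1 * b) / (M 1 0 + M 1 1 * b) - M 0 1 * t / (M 1 1 * t)
      = (M 0 0 * M 1 1 - M 0 1 * M 1 0) / ((M 1 0 + M 1 1 * b) * M 1 1) := by
    field_simp; ring
  have eR : len M = (M 0 0 * M 1 1 - M 0 1 * M 1 0) / (M 1 0 * M 1 1) := by
    unfold len; field_simp
  rw [eL, eR]
  gcongr
  all_goals first | exact hdet.le | positivity | nlinarith

lemma len_pair {M : Mat} (h : Good M) {u c b t : ℝ} (hu0 : 0 < u) (hu1 : u ≤ 1) (hc : 1 ≤ c)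
    (hb : 1 ≤ b) (ht : 0 < t) :
    len (M * !![u, c; 0, 1] * !![1, 0; b, t]) ≤ len M / 4 := by
  obtain ⟨hA, hB, hC, hD, hdet⟩ := h
  have hDD : (0:ℝ) < M 1 0 * c + M 1 1 := by nlinarith
  have hCC : (0:ℝ) < M 1 0 * u + (M 1 0 * c + M 1 1) * b := by nlinarith
  rw [mul_tri1, mul_tri2]
  simp only [Fin.isValue, Matrix.of_apply, Matrix.cons_val', Matrix.cons_val_zero,
    Matrix.empty_val', Matrix.cons_val_fin_one, Matrix.cons_val_one, Matrix.head_fin_const,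
    Matrix.head_cons]
  rw [len_lit]
  have eL : (M 0 0 * u + (M 0 0 * c + M 0 1) * b) / (M 1 0 * u + (M 1 0 * c + M 1 1) * b)
      - (M 0 0 * c + M 0 1) * t / ((M 1 0 * c + M 1 1) * t)
      = (u * (M 0 0 * M 1 1 - M 0 1 * M 1 0)) /
        ((M 1 0 * u + (M 1 0 * c + M 1 1) * b) * (M 1 0 * c + M 1 1)) := by
    field_simp; ring
  have eR : len M = (M 0 0 * M 1 1 - M 0 1 * M 1 0) / (M 1 0 * M 1 1) := by
    unfold len; field_simp
  rw [eL, eR, div_div, div_le_div_iff₀ (by positivity) (by positivity)]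
  have key : 4 * (u * (M 1 0 * M 1 1)) ≤
      (M 1 0 * u + (M 1 0 * c + M 1 1) * b) * (M 1 0 * c + M 1 1) := by
    nlinarith [sq_nonneg (M 1 0 - M 1 1), mul_pos hC hD,
      mul_nonneg (sub_nonneg.2 hb) (mul_pos hDD hDD).le,
      mul_nonneg (mul_nonneg (sub_nonneg.2 hc) hC.le) hD.le,
      mul_nonneg (mul_nonneg (sub_nonneg.2 hc) hC.le) hC.le,
      mul_nonneg (mul_nonneg (sub_nonneg.2 hc) (mul_nonneg (sub_nonneg.2 hc) hC.le)) hC.le,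
      mul_nonneg (mul_nonneg (sub_nonneg.2 hu1) hC.le) hD.le]
  nlinarith [mul_le_mul_of_nonneg_left key hdet.le]

lemma sig1_inv (q : ℝ) (hq : q ≠ 0) : (sig1 q)⁻¹ = !![q, 1; 0, 1] := by
  apply Matrix.inv_eq_left_inv
  rw [sig1, Matrix.mul_fin_two, Matrix.one_fin_two]
  ext i j
  fin_cases i <;> fin_cases j <;> simp [hq]

lemma sig1_zpow (q : ℝ) (hq : q ≠ 0) (m : ℕ) :
    sig1 q ^ (-(m : ℤ)) = !![q ^ m, ∑ i ∈ Finset.range m, q ^ i; 0, 1] := by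
  rw [Matrix.zpow_neg_natCast, ← Matrix.inv_pow', sig1_inv q hq]
  induction m with
  | zero => simp [Matrix.one_fin_two]
  | succ n ih =>
    rw [pow_succ, ih, Matrix.mul_fin_two]
    ext i j
    fin_cases i <;> fin_cases j <;> simp [Finset.sum_range_succ, pow_succ] <;> ring

lemma sig2_pow (q : ℝ) (m : ℕ) :
    sig2 q ^ m = !![1, 0; ∑ i ∈ Finset.range m, (q⁻¹) ^ i, (q⁻¹) ^ m] := by
  induction m with
  | zero => simp [Matrix.one_fin_two]
  | succ n ih =>
    rw [pow_succ, ih, sig2, Matrix.mul_fin_two]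
    ext i j
    fin_cases i <;> fin_cases j <;> simp [Finset.sum_range_succ, pow_succ]

lemma sum_pow_ge_one {q : ℝ} (hq : 0 < q) {m : ℕ} (hm : 1 ≤ m) :
    1 ≤ ∑ i ∈ Finset.range m, q ^ i := by
  have h0 : q ^ 0 ≤ ∑ i ∈ Finset.range m, q ^ i :=
    Finset.single_le_sum (f := fun i => q ^ i) (fun i _ => (pow_nonneg hq.le i))
      (Finset.mem_range.2 hm)
  simpa using h0

lemma one_le_invq {q : ℝ} (hq0 : 0 < q) (hq1 : q < 1) : 1 ≤ q⁻¹ :=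
  (one_le_inv₀ hq0).2 hq1.le

/-- Odd step factorization. -/
lemma beta_step_odd (q : ℝ) (hq0 : 0 < q) (hq1 : q < 1) (a : ℕ → ℤ)
    (h2 : ∀ k, 2 ≤ k → 1 ≤ a k) (n : ℕ) (hn : 1 ≤ n) (hpar : (n + 1) % 2 = 1) :
    ∃ u c : ℝ, 0 < u ∧ u ≤ 1 ∧ 1 ≤ c ∧
      betaMat q a (n + 1) = betaMat q a n * !![u, c; 0, 1] := by
  have ha : 1 ≤ a (n + 1) := h2 (n + 1) (by omega)
  set m := (a (n + 1)).toNat with hm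
  have hm1 : 1 ≤ m := by omega
  have haz : a (n + 1) = (m : ℤ) := by omega
  refine ⟨q ^ m, ∑ i ∈ Finset.range m, q ^ i, pow_pos hq0 m,
    pow_le_one₀ hq0.le hq1.le, sum_pow_ge_one hq0 hm1, ?_⟩
  have hdef : betaMat q a (n + 1) = betaMat q a n *
      (if (n + 1) % 2 = 1 then sig1 q ^ (-(a (n + 1))) else sig2 q ^ (a (n + 1))) := rfl
  rw [hdef, if_pos hpar, haz, sig1_zpow q (ne_of_gt hq0)]

/-- Even step factorization. -/
lemma beta_step_even (q : ℝ) (hq0 : 0 < q) (hq1 : q < 1) (a : ℕ → ℤ)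
    (h2 : ∀ k, 2 ≤ k → 1 ≤ a k) (n : ℕ) (hn : 1 ≤ n) (hpar : (n + 1) % 2 = 0) :
    ∃ b t : ℝ, 1 ≤ b ∧ 1 ≤ t ∧
      betaMat q a (n + 1) = betaMat q a n * !![1, 0; b, t] := by
  have ha : 1 ≤ a (n + 1) := h2 (n + 1) (by omega)
  set m := (a (n + 1)).toNat with hm
  have hm1 : 1 ≤ m := by omega
  have haz : a (n + 1) = (m : ℤ) := by omega
  have hinv := one_le_invq hq0 hq1
  refine ⟨∑ i ∈ Finset.range m, (q⁻¹) ^ i, (q⁻¹) ^ m,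
    sum_pow_ge_one (by positivity) hm1, one_le_pow₀ hinv, ?_⟩
  have hdef : betaMat q a (n + 1) = betaMat q a n *
      (if (n + 1) % 2 = 1 then sig1 q ^ (-(a (n + 1))) else sig2 q ^ (a (n + 1))) := rfl
  rw [hdef, if_neg (by omega), haz, zpow_natCast, sig2_pow]

/-- The base case `n = 2`. -/
lemma good_base (q : ℝ) (hq0 : 0 < q) (hq1 : q < 1) (a : ℕ → ℤ)
    (h1 : 0 ≤ a 1) (h2 : ∀ k, 2 ≤ k → 1 ≤ a k) :
    Good (betaMat q a 2) := by
  obtain ⟨b, t, hb, ht, heq⟩ := beta_step_even q hq0 hq1 a h2 1 le_rfl rfl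
  rw [heq]
  set m := (a 1).toNat with hm
  have haz : a 1 = (m : ℤ) := by omega
  have h1def : betaMat q a 1 = betaMat q a 0 *
      (if 1 % 2 = 1 then sig1 q ^ (-(a 1)) else sig2 q ^ (a 1)) := rfl
  have h0def : betaMat q a 0 = 1 := rfl
  have hbeta1 : betaMat q a 1 = !![q ^ m, ∑ i ∈ Finset.range m, q ^ i; 0, 1] := by
    rw [h1def, h0def, if_pos rfl, haz, sig1_zpow q (ne_of_gt hq0), one_mul]
  rw [mul_tri2, hbeta1]
  have hqm : (0:ℝ) < q ^ m := pow_pos hq0 m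
  have hs : (0:ℝ) ≤ ∑ i ∈ Finset.range m, q ^ i :=
    Finset.sum_nonneg fun i _ => pow_nonneg hq0.le i
  refine ⟨?_, ?_, ?_, ?_, ?_⟩ <;> simp <;> nlinarith

lemma good_all (q : ℝ) (hq0 : 0 < q) (hq1 : q < 1) (a : ℕ → ℤ)
    (h1 : 0 ≤ a 1) (h2 : ∀ k, 2 ≤ k → 1 ≤ a k) :
    ∀ n, 2 ≤ n → Good (betaMat q a n) := by
  intro n hn
  induction n, hn using Nat.le_induction with
  | base => exact good_base q hq0 hq1 a h1 h2
  | succ n hn ih =>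
    rcases Nat.mod_two_eq_zero_or_one (n + 1) with hpar | hpar
    · obtain ⟨b, t, hb, ht, heq⟩ := beta_step_even q hq0 hq1 a h2 n (by omega) hpar
      rw [heq]; exact good_step2 ih hb (by linarith)
    · obtain ⟨u, c, hu0, hu1, hc, heq⟩ := beta_step_odd q hq0 hq1 a h2 n (by omega) hpar
      rw [heq]; exact good_step1 ih hu0 hc

end QDC

/-- convergence of q-deformed convergents of an infinite continued
fraction: for 0 < q < 1 and integers a₁ ≥ 0, aₖ ≥ 1 (k ≥ 2), with Mₙ the product of
the first n alternating factors and vₙ = Mₙ·(1, 0)ᵀ, the second coordinate of vₙ is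
positive for n ≥ 2 and the ratios (vₙ)₁/(vₙ)₂ converge in ℝ. -/
theorem qdeform_convergents_converge (q : ℝ) (hq0 : 0 < q) (hq1 : q < 1)
    (a : ℕ → ℤ) (h1 : 0 ≤ a 1) (h2 : ∀ k, 2 ≤ k → 1 ≤ a k) :
    (∀ n, 2 ≤ n → 0 < (betaMat q a n *ᵥ ![1, 0]) 1) ∧
    ∃ L : ℝ, Tendsto
      (fun n => (betaMat q a n *ᵥ ![1, 0]) 0 / (betaMat q a n *ᵥ ![1, 0]) 1)
      atTop (nhds L) := by
  have hGood := QDC.good_all q hq0 hq1 a h1 h2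
  have hv1 : ∀ n, (betaMat q a n *ᵥ ![1, 0]) 1 = betaMat q a n 1 0 := by
    intro n; simp [Matrix.mulVec, dotProduct, Fin.sum_univ_two]
  have hv0 : ∀ n, (betaMat q a n *ᵥ ![1, 0]) 0 = betaMat q a n 0 0 := by
    intro n; simp [Matrix.mulVec, dotProduct, Fin.sum_univ_two]
  constructor
  · intro n hn; rw [hv1]; exact (hGood n hn).2.2.1
  -- abbreviations
  have hlo_le_x : ∀ n, 2 ≤ n →
      betaMat q a n 0 1 / betaMat q a n 1 1 ≤ betaMat q a n 0 0 / betaMat q a n 1 0 := by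
    intro n hn
    obtain ⟨hA, hB, hC, hD, hdet⟩ := hGood n hn
    rw [div_le_div_iff₀ hD hC]; nlinarith
  have hmono : ∀ n, 2 ≤ n →
      (betaMat q a (n+1) 0 0 / betaMat q a (n+1) 1 0
        ≤ betaMat q a n 0 0 / betaMat q a n 1 0) ∧
      (betaMat q a n 0 1 / betaMat q a n 1 1
        ≤ betaMat q a (n+1) 0 1 / betaMat q a (n+1) 1 1) ∧
      QDC.len (betaMat q a (n+1)) ≤ QDC.len (betaMat q a n) := by
    intro n hn
    have hg := hGood n hn
    rcases Nat.mod_two_eq_zero_or_one (n + 1) with hpar | hpar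
    · obtain ⟨b, t, hb, ht, heq⟩ := QDC.beta_step_even q hq0 hq1 a h2 n (by omega) hpar
      have hn2 := QDC.nest_step2 hg hb (by linarith : (0:ℝ) < t)
      have hl2 := QDC.len_step2 hg hb (by linarith : (0:ℝ) < t)
      rw [heq]
      exact ⟨hn2.1, hn2.2, hl2⟩
    · obtain ⟨u, c, hu0, hu1, hc, heq⟩ := QDC.beta_step_odd q hq0 hq1 a h2 n (by omega) hpar
      have hn1 := QDC.nest_step1 hg hu0 hc
      have hl1 := QDC.len_step1 hg hu0 hc
      rw [heq]
      exact ⟨hn1.1, hn1.2, hl1⟩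
  have hchain : ∀ N, 2 ≤ N → ∀ k, N ≤ k →
      betaMat q a N 0 1 / betaMat q a N 1 1 ≤ betaMat q a k 0 1 / betaMat q a k 1 1 ∧
      betaMat q a k 0 0 / betaMat q a k 1 0 ≤ betaMat q a N 0 0 / betaMat q a N 1 0 := by
    intro N hN k hk
    induction k, hk using Nat.le_induction with
    | base => exact ⟨le_rfl, le_rfl⟩
    | succ k hk ih =>
      have h := hmono k (by omega)
      exact ⟨ih.1.trans h.2.1, h.1.trans ih.2⟩
  have hlen_anti : ∀ N, 2 ≤ N → ∀ k, N ≤ k →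
      QDC.len (betaMat q a k) ≤ QDC.len (betaMat q a N) := by
    intro N hN k hk
    induction k, hk using Nat.le_induction with
    | base => exact le_rfl
    | succ k hk ih => exact ((hmono k (by omega)).2.2).trans ih
  have hpair : ∀ m : ℕ,
      QDC.len (betaMat q a (2*m+4)) ≤ QDC.len (betaMat q a (2*m+2)) / 4 := by
    intro m
    obtain ⟨u, c, hu0, hu1, hc, heq1⟩ :=
      QDC.beta_step_odd q hq0 hq1 a h2 (2*m+2) (by omega) (by omega)
    obtain ⟨b, t, hb, ht, heq2⟩ :=
      QDC.beta_step_even q hq0 hq1 a h2 (2*m+3) (by omega) (by omega)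
    have e23 : 2*m+2+1 = 2*m+3 := by omega
    have e34 : 2*m+3+1 = 2*m+4 := by omega
    rw [e23] at heq1
    rw [e34] at heq2
    rw [heq2, heq1]
    exact QDC.len_pair (hGood _ (by omega)) hu0 hu1 hc hb (by linarith)
  have hgeo : ∀ m : ℕ,
      QDC.len (betaMat q a (2*m+2)) ≤ QDC.len (betaMat q a 2) * (1/4)^m := by
    intro m
    induction m with
    | zero => simp
    | succ m ih =>
      have e : 2*(m+1)+2 = 2*m+4 := by omega
      rw [e]
      calc QDC.len (betaMat q a (2*m+4)) ≤ QDC.len (betaMat q a (2*m+2)) / 4 := hpair m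
        _ ≤ (QDC.len (betaMat q a 2) * (1/4)^m) / 4 := by linarith
        _ = QDC.len (betaMat q a 2) * (1/4)^(m+1) := by rw [pow_succ]; ring
  have hlen2_nonneg : 0 ≤ QDC.len (betaMat q a 2) :=
    sub_nonneg.2 (hlo_le_x 2 le_rfl)
  set bfun : ℕ → ℝ := fun N => QDC.len (betaMat q a 2) * (2 * (1/2)^N) with hbfun
  have hbN : ∀ N : ℕ, QDC.len (betaMat q a (N+2)) ≤ bfun N := by
    intro N
    have key : ((1:ℝ)/4)^(N/2) ≤ 2*(1/2)^N := by
      have e1 : ((1:ℝ)/4)^(N/2) = (1/2)^(2*(N/2)) := by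
        rw [pow_mul]; norm_num
      have e2 : ((1:ℝ)/2)^(2*(N/2)) ≤ (1/2)^(N-1) :=
        pow_le_pow_of_le_one (by norm_num) (by norm_num) (by omega)
      have e3 : ((1:ℝ)/2)^(N-1) ≤ 2*(1/2)^N := by
        rcases N with _ | N
        · norm_num
        · have eN : N + 1 - 1 = N := rfl
          have e4 : (2:ℝ)*(1/2)^(N+1) = (1/2)^N := by rw [pow_succ]; ring
          rw [eN, e4]
      linarith [e1 ▸ e2.trans e3]
    calc QDC.len (betaMat q a (N+2))
        ≤ QDC.len (betaMat q a (2*(N/2)+2)) :=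
          hlen_anti (2*(N/2)+2) (by omega) (N+2) (by omega)
      _ ≤ QDC.len (betaMat q a 2) * (1/4)^(N/2) := hgeo (N/2)
      _ ≤ QDC.len (betaMat q a 2) * (2*(1/2)^N) := by
          exact mul_le_mul_of_nonneg_left key hlen2_nonneg
  set s : ℕ → ℝ := fun n => betaMat q a (n+2) 0 0 / betaMat q a (n+2) 1 0 with hs
  have hdist : ∀ n m N : ℕ, N ≤ n → N ≤ m → dist (s n) (s m) ≤ bfun N := by
    intro n m N hn hm
    have hcn := hchain (N+2) (by omega) (n+2) (by omega)
    have hcm := hchain (N+2) (by omega) (m+2) (by omega)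
    have hlxn := hlo_le_x (n+2) (by omega)
    have hlxm := hlo_le_x (m+2) (by omega)
    have hlen : betaMat q a (N+2) 0 0 / betaMat q a (N+2) 1 0
        - betaMat q a (N+2) 0 1 / betaMat q a (N+2) 1 1 = QDC.len (betaMat q a (N+2)) := rfl
    have hb := hbN N
    rw [Real.dist_eq, abs_le]
    constructor
    · simp only [hs]; linarith [hcn.1, hcn.2, hcm.1, hcm.2]
    · simp only [hs]; linarith [hcn.1, hcn.2, hcm.1, hcm.2]
  have htend : Tendsto bfun atTop (nhds 0) := by
    have h0 : Tendsto (fun N : ℕ => ((1:ℝ)/2)^N) atTop (nhds 0) :=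
      tendsto_pow_atTop_nhds_zero_of_lt_one (by norm_num) (by norm_num)
    have h1 : Tendsto (fun N : ℕ => QDC.len (betaMat q a 2) * (2 * (1/2)^N)) atTop
        (nhds (QDC.len (betaMat q a 2) * (2 * 0))) :=
      Tendsto.const_mul _ (Tendsto.const_mul _ h0)
    have : QDC.len (betaMat q a 2) * (2 * 0) = 0 := by ring
    rw [this] at h1
    exact h1
  have hcs : CauchySeq s := cauchySeq_of_le_tendsto_0 bfun hdist htend
  obtain ⟨L, hL⟩ := cauchySeq_tendsto_of_complete hcs
  refine ⟨L, ?_⟩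
  rw [← Filter.tendsto_add_atTop_iff_nat 2]
  refine hL.congr fun n => ?_
  rw [hv0, hv1]
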